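/- Let (S, dist_S) be a metric space with its Borel σ-algebra, A a measurable space, and p : S → A → ProbabilityMeasure S a measurable Markov kernel satisfying the time-Lipschitz condition: for every (s,a) ∈ S×A and every 1-Lipschitz function f : S → ℝ integrable with respect to p(s,a), |∫ f d p(s,a) − f(s)| ≤ L_T. Fix d ∈ ℕ, a state s₁ ∈ S and actions a₁, …, a_d ∈ A, and define the belief measures by b₀ = δ_{s₁} (the Dirac measure at s₁) and b_k = b_{k−1}.bind (s ↦ p(s, a_k)) for k = 1, …, d. Then for every 1-Lipschitz function f : S → ℝ integrable with respect to b_d, |∫ f d b_d − f(s₁)| ≤ d · L_T. -/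

import Mathlib

open MeasureTheory

/-- The belief over the current state given a last observed state `s₁` and a queue of actions
`as = [a₁, …, a_d]`: the iterated bind of `δ_{s₁}` through the kernel `p` with the actions of
the queue, applied in order. -/
noncomputable def belief {S A : Type*} [MeasurableSpace S]
    (p : S → A → Measure S) (s₁ : S) (as : List A) : Measure S :=
  as.foldl (fun b a => b.bind fun s => p s a) (Measure.dirac s₁)

section Aux

open ProbabilityTheory

variable {S : Type*} [MeasurableSpace S]

lemma bind_eq_snd_compProd (μ : Measure S) [SFinite μ] (κ : Kernel S S) [IsSFiniteKernel κ] :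
    μ.bind ⇑κ = (μ.compProd κ).snd := by
  ext s hs
  rw [Measure.bind_apply hs κ.measurable.aemeasurable, Measure.snd_apply hs,
    Measure.compProd_apply (measurable_snd hs)]
  rfl

lemma isProbabilityMeasure_bind (μ : Measure S) [IsProbabilityMeasure μ]
    (κ : Kernel S S) [IsMarkovKernel κ] :
    IsProbabilityMeasure (μ.bind ⇑κ) := by
  rw [bind_eq_snd_compProd]
  infer_instance

/-- One-step estimate. -/
lemma step_estimate [MetricSpace S] [BorelSpace S]
    (μ : Measure S) [IsProbabilityMeasure μ] (κ : Kernel S S) [IsMarkovKernel κ]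
    {L_T : ℝ}
    (hκ : ∀ s : S, ∀ f : S → ℝ, LipschitzWith 1 f → Integrable f (κ s) →
      |(∫ y, f y ∂(κ s)) - f s| ≤ L_T)
    (f : S → ℝ) (hf : LipschitzWith 1 f) (hint : Integrable f (μ.bind ⇑κ)) :
    Integrable f μ ∧ |(∫ y, f y ∂(μ.bind ⇑κ)) - ∫ y, f y ∂μ| ≤ L_T := by
  have hfc : Continuous f := hf.continuous
  have hfm : StronglyMeasurable f := hfc.stronglyMeasurable
  -- rewrite bind as snd of compProd
  have hbind : μ.bind ⇑κ = (μ.compProd κ).snd := bind_eq_snd_compProd μ κ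
  have hsnd : (μ.compProd κ).snd = Measure.map Prod.snd (μ.compProd κ) := rfl
  have hint2 : Integrable (fun q : S × S => f q.2) (μ.compProd κ) := by
    rw [hbind, hsnd] at hint
    exact (integrable_map_measure hfm.aestronglyMeasurable
      measurable_snd.aemeasurable).mp hint
  have hint3 := (Measure.integrable_compProd_iff hint2.aestronglyMeasurable).mp hint2
  obtain ⟨hae, hnorm⟩ := hint3
  -- the function g s = ∫ f dκ s
  set g : S → ℝ := fun s => ∫ y, f y ∂(κ s) with hg
  have hgm : StronglyMeasurable g :=
    (hfm.comp_measurable measurable_snd).integral_kernel_prod_right' (κ := κ)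
  have hg_int : Integrable g μ := by
    refine hnorm.mono' hgm.aestronglyMeasurable ?_
    filter_upwards with s
    exact norm_integral_le_integral_norm _
  have hgf : ∀ᵐ s ∂μ, |g s - f s| ≤ L_T := by
    filter_upwards [hae] with s hs
    exact hκ s f hf hs
  -- f integrable w.r.t. μ
  have hf_int : Integrable f μ := by
    refine (hg_int.norm.add (integrable_const L_T)).mono'
      hfm.aestronglyMeasurable ?_
    filter_upwards [hgf] with s hs
    have : |f s| ≤ |g s| + |g s - f s| := by
      have := abs_sub_abs_le_abs_sub (f s) (g s)
      rw [abs_sub_comm (f s) (g s)] at this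
      linarith
    calc ‖f s‖ = |f s| := rfl
      _ ≤ |g s| + |g s - f s| := this
      _ ≤ ‖g s‖ + L_T := by
          simp only [Real.norm_eq_abs]
          linarith
  refine ⟨hf_int, ?_⟩
  -- compute the integral over the bind
  have hcalc : ∫ y, f y ∂(μ.bind ⇑κ) = ∫ s, g s ∂μ := by
    rw [hbind, hsnd, integral_map measurable_snd.aemeasurable hfm.aestronglyMeasurable,
      Measure.integral_compProd hint2]
  rw [hcalc, ← integral_sub hg_int hf_int]
  calc |∫ s, (g s - f s) ∂μ| ≤ ∫ s, |g s - f s| ∂μ := by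
        simpa [Real.norm_eq_abs] using
          norm_integral_le_integral_norm (μ := μ) (fun s => g s - f s)
    _ ≤ ∫ _, L_T ∂μ := by
        refine integral_mono_ae ((hg_int.sub hf_int).abs) (integrable_const _) hgf
    _ = L_T := by simp

end Aux

/-- **Proposition (tlc_delay).** In an `L_T`-time-Lipschitz MDP (dual form:
`|∫ f dp(s,a) − f(s)| ≤ L_T` for every 1-Lipschitz `f`), the belief after a delay of `d`
steps is within (dual-form) Wasserstein distance `d · L_T` of the Dirac at the last observed
state. -/
theorem tlc_delay {S A : Type*} [MetricSpace S] [MeasurableSpace S] [BorelSpace S]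
    [MeasurableSpace A]
    (p : S → A → Measure S) (hp_prob : ∀ s a, IsProbabilityMeasure (p s a))
    (hp_meas : Measurable fun q : S × A => p q.1 q.2)
    (L_T : ℝ)
    (hTLC : ∀ (s : S) (a : A), ∀ f : S → ℝ, LipschitzWith 1 f → Integrable f (p s a) →
      |(∫ y, f y ∂(p s a)) - f s| ≤ L_T)
    (s₁ : S) (as : List A) :
    ∀ f : S → ℝ, LipschitzWith 1 f → Integrable f (belief p s₁ as) →
      |(∫ y, f y ∂(belief p s₁ as)) - f s₁| ≤ (as.length : ℝ) * L_T := by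
  -- kernels
  have hκm : ∀ a : A, Measurable (fun s => p s a) := fun a =>
    hp_meas.comp (measurable_id.prodMk measurable_const)
  let κ : A → ProbabilityTheory.Kernel S S := fun a => ⟨fun s => p s a, hκm a⟩
  have hκmarkov : ∀ a, ProbabilityTheory.IsMarkovKernel (κ a) :=
    fun a => ⟨fun s => hp_prob s a⟩
  have hprob : ∀ as : List A, IsProbabilityMeasure (belief p s₁ as) := by
    intro as
    induction as using List.reverseRecOn with
    | nil =>
      simp only [belief, List.foldl_nil]
      infer_instance
    | append_singleton as a ih =>
      have heq : belief p s₁ (as ++ [a]) = (belief p s₁ as).bind ⇑(κ a) := by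
        simp [belief, List.foldl_append]
        rfl
      rw [heq]
      have := hκmarkov a
      exact isProbabilityMeasure_bind (belief p s₁ as) (κ a)
  induction as using List.reverseRecOn with
  | nil =>
    intro f hf hint
    simp [belief]
  | append_singleton as a ih =>
    intro f hf hint
    have heq : belief p s₁ (as ++ [a]) = (belief p s₁ as).bind ⇑(κ a) := by
      simp [belief, List.foldl_append]
      rfl
    rw [heq] at hint ⊢
    have := hprob as
    have := hκmarkov a
    obtain ⟨hf_int, hstep⟩ := step_estimate (belief p s₁ as) (κ a)
      (fun s => hTLC s a) f hf hint
    have hih := ih f hf hf_int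
    calc |(∫ y, f y ∂((belief p s₁ as).bind ⇑(κ a))) - f s₁|
        ≤ |(∫ y, f y ∂((belief p s₁ as).bind ⇑(κ a))) - ∫ y, f y ∂(belief p s₁ as)|
          + |(∫ y, f y ∂(belief p s₁ as)) - f s₁| := abs_sub_le _ _ _
      _ ≤ L_T + (as.length : ℝ) * L_T := add_le_add hstep hih
      _ = ((as ++ [a]).length : ℝ) * L_T := by
          simp [List.length_append]
          ring
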